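/- arXiv:2411.00119 — 5 statements merged into one kernel-verified Lean document; each statement's English description precedes it below -/
import Mathlib

section
/- Let c ∈ A be a strong Condorcet winner for the preference-count matrix N. Then the sigmoid loss L̃ is strictly decreasing in the rating of c: for any rating vector θ : A → ℝ and any real numbers t < t', the vector θ' obtained from θ by setting the rating of c to t' (and leaving all other coordinates unchanged) satisfies L̃(θ') < L̃(θ[c := t]); equivalently, for every fixed assignment of ratings to A \ {c}, the function t ↦ L̃(θ with θ(c) = t) is strictly antitone on ℝ. -/
/-- If `c` is a strong Condorcet winner for the preference-count
matrix `N`, then the sigmoid loss is strictly decreasing (strictly antitone)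
in the rating of `c`. -/
theorem sco_sigmoid_loss_strictAnti_in_condorcet_winner
    {A : Type*} [Fintype A] [DecidableEq A]
    (hA : 1 < Fintype.card A)
    (N : A → A → ℕ) (hdiag : ∀ a, N a a = 0)
    (τ : ℝ) (hτ : 0 < τ)
    (c : A) (hc : ∀ b, b ≠ c → N b c < N c b)
    (σ : ℝ → ℝ) (hσ : ∀ x, σ x = 1 / (1 + Real.exp (-x / τ)))
    (L : (A → ℝ) → ℝ)
    (hL : ∀ θ : A → ℝ, L θ = ∑ a : A, ∑ b : A, (N a b : ℝ) * σ (θ b - θ a))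
    (θ : A → ℝ) :
    StrictAnti (fun t : ℝ => L (Function.update θ c t)) := by
  have hσ_neg : ∀ x : ℝ, σ (-x) = 1 - σ x := by
    intro x
    have h1 : (0:ℝ) < 1 + Real.exp (-x / τ) := by positivity
    have h2 : (0:ℝ) < 1 + Real.exp (-(-x) / τ) := by positivity
    have he : Real.exp (-(-x) / τ) = (Real.exp (-x / τ))⁻¹ := by
      rw [← Real.exp_neg]; ring_nf
    rw [hσ, hσ, he]
    have hε : Real.exp (-x / τ) ≠ 0 := (Real.exp_pos _).ne'
    field_simp
    ring
  have hσ_mono : StrictMono σ := by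
    intro x y hxy
    rw [hσ, hσ]
    have h1 : Real.exp (-y / τ) < Real.exp (-x / τ) := by
      apply Real.exp_lt_exp.mpr
      apply div_lt_div_of_pos_right _ hτ <;> linarith
    have h2 : (0:ℝ) < 1 + Real.exp (-y / τ) := by positivity
    apply one_div_lt_one_div_of_lt h2
    linarith
  -- key decomposition
  have key : ∀ s : ℝ,
      (∑ a : A, ∑ b : A, (N a b : ℝ) * σ (Function.update θ c s b - Function.update θ c s a))
      = (∑ a ∈ Finset.univ.erase c,
          ((N c a : ℝ) * σ (θ a - s) + (N a c : ℝ) * σ (s - θ a)))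
        + ∑ a ∈ Finset.univ.erase c, ∑ b ∈ Finset.univ.erase c,
            (N a b : ℝ) * σ (θ b - θ a) := by
    intro s
    rw [← Finset.sum_erase_add _ _ (Finset.mem_univ c)]
    have hgc : (∑ b : A, (N c b : ℝ) * σ (Function.update θ c s b - Function.update θ c s c))
        = ∑ b ∈ Finset.univ.erase c, (N c b : ℝ) * σ (θ b - s) := by
      rw [← Finset.sum_erase_add _ _ (Finset.mem_univ c), hdiag, Nat.cast_zero,
        zero_mul, add_zero]
      apply Finset.sum_congr rfl
      intro b hb
      have hb' : b ≠ c := Finset.ne_of_mem_erase hb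
      simp [Function.update_apply, hb']
    have hga : ∀ a ∈ Finset.univ.erase c,
        (∑ b : A, (N a b : ℝ) * σ (Function.update θ c s b - Function.update θ c s a))
        = (N a c : ℝ) * σ (s - θ a)
          + ∑ b ∈ Finset.univ.erase c, (N a b : ℝ) * σ (θ b - θ a) := by
      intro a ha
      have ha' : a ≠ c := Finset.ne_of_mem_erase ha
      rw [← Finset.sum_erase_add _ _ (Finset.mem_univ c)]
      rw [add_comm]
      congr 1
      · simp [Function.update_apply, ha']
      · apply Finset.sum_congr rfl
        intro b hb
        have hb' : b ≠ c := Finset.ne_of_mem_erase hb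
        simp [Function.update_apply, hb', ha']
    rw [Finset.sum_congr rfl hga, hgc]
    rw [Finset.sum_add_distrib, Finset.sum_add_distrib]
    ring
  intro t t' htt'
  simp only [hL, key]
  apply add_lt_add_left
  apply Finset.sum_lt_sum_of_nonempty
  · obtain ⟨b, hb⟩ := Fintype.exists_ne_of_one_lt_card hA c
    exact ⟨b, Finset.mem_erase.mpr ⟨hb, Finset.mem_univ b⟩⟩
  · intro a ha
    have ha' : a ≠ c := Finset.ne_of_mem_erase ha
    have hN : (N a c : ℝ) < (N c a : ℝ) := by exact_mod_cast hc a ha'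
    have e1 : σ (θ a - t) = 1 - σ (t - θ a) := by
      rw [show θ a - t = -(t - θ a) by ring, hσ_neg]
    have e2 : σ (θ a - t') = 1 - σ (t' - θ a) := by
      rw [show θ a - t' = -(t' - θ a) by ring, hσ_neg]
    have hs : σ (t - θ a) < σ (t' - θ a) := hσ_mono (by linarith)
    rw [e1, e2]
    nlinarith
end

section
/- Let c ∈ A be a strong Condorcet winner for the preference-count matrix N, and let θ_max > 0. If θ* minimizes the sigmoid loss L̃ over the ℓ∞ ball {θ : A → ℝ | |θ(a)| ≤ θ_max for all a ∈ A}, then θ*(c) = θ_max. -/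
/-- If `c` is a strong Condorcet winner and `θ*` minimizes the
sigmoid loss over the ℓ∞ ball of radius `θmax > 0`, then `θ* c = θmax`. -/
theorem sco_global_min_puts_condorcet_winner_at_thetaMax
    {A : Type*} [Fintype A] [DecidableEq A]
    (hA : 1 < Fintype.card A)
    (N : A → A → ℕ) (hdiag : ∀ a, N a a = 0)
    (τ : ℝ) (hτ : 0 < τ)
    (c : A) (hc : ∀ b, b ≠ c → N b c < N c b)
    (σ : ℝ → ℝ) (hσ : ∀ x, σ x = 1 / (1 + Real.exp (-x / τ)))
    (L : (A → ℝ) → ℝ)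
    (hL : ∀ θ : A → ℝ, L θ = ∑ a : A, ∑ b : A, (N a b : ℝ) * σ (θ b - θ a))
    (θmax : ℝ) (hθmax : 0 < θmax)
    (θstar : A → ℝ) (hball : ∀ a, |θstar a| ≤ θmax)
    (hmin : ∀ θ : A → ℝ, (∀ a, |θ a| ≤ θmax) → L θstar ≤ L θ) :
    θstar c = θmax := by
  -- basic facts about σ
  have hσneg : ∀ x : ℝ, σ (-x) = 1 - σ x := by
    intro x
    have h1 : (0:ℝ) < Real.exp (-x / τ) := Real.exp_pos _
    have h2 : (0:ℝ) < Real.exp (x / τ) := Real.exp_pos _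
    have hinv : Real.exp (-x / τ) = (Real.exp (x / τ))⁻¹ := by
      rw [neg_div, Real.exp_neg]
    rw [hσ, hσ, neg_neg, hinv]
    field_simp
    ring
  have hσmono : StrictMono σ := by
    intro x y hxy
    rw [hσ, hσ]
    have h1 : Real.exp (-y / τ) < Real.exp (-x / τ) := by
      apply Real.exp_lt_exp.mpr
      apply div_lt_div_of_pos_right _ hτ
      linarith
    have h2 : (0:ℝ) < 1 + Real.exp (-y / τ) := by positivity
    apply one_div_lt_one_div_of_lt h2
    linarith
  by_contra hne
  have hlt : θstar c < θmax := by
    have := (abs_le.mp (hball c)).2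
    exact lt_of_le_of_ne this hne
  -- the perturbed point
  set θ' : A → ℝ := Function.update θstar c θmax with hθ'
  have hθ'c : θ' c = θmax := Function.update_self c θmax θstar
  have hθ'ne : ∀ a, a ≠ c → θ' a = θstar a := fun a ha =>
    Function.update_of_ne ha θmax θstar
  have hball' : ∀ a, |θ' a| ≤ θmax := by
    intro a
    by_cases h : a = c
    · subst h; rw [hθ'c, abs_of_pos hθmax]
    · rw [hθ'ne a h]; exact hball a
  -- decomposition of L
  have key : ∀ θ : A → ℝ,
      L θ = (∑ b ∈ Finset.univ.erase c,
              ((N c b : ℝ) * σ (θ b - θ c) + (N b c : ℝ) * σ (θ c - θ b)))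
          + ∑ a ∈ Finset.univ.erase c, ∑ b ∈ Finset.univ.erase c,
              (N a b : ℝ) * σ (θ b - θ a) := by
    intro θ
    rw [hL]
    have hsplit : ∀ a : A, (∑ b : A, (N a b : ℝ) * σ (θ b - θ a))
        = (N a c : ℝ) * σ (θ c - θ a)
          + ∑ b ∈ Finset.univ.erase c, (N a b : ℝ) * σ (θ b - θ a) := by
      intro a
      rw [← Finset.add_sum_erase _ _ (Finset.mem_univ c)]
    simp_rw [hsplit]
    rw [Finset.sum_add_distrib]
    rw [← Finset.add_sum_erase _ (fun a => (N a c : ℝ) * σ (θ c - θ a)) (Finset.mem_univ c)]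
    rw [← Finset.add_sum_erase _ (fun a => ∑ b ∈ Finset.univ.erase c,
          (N a b : ℝ) * σ (θ b - θ a)) (Finset.mem_univ c)]
    rw [hdiag c]
    push_cast
    rw [Finset.sum_add_distrib]
    ring
  -- strict decrease
  have hLlt : L θ' < L θstar := by
    rw [key θ', key θstar]
    have hsame : ∀ a ∈ Finset.univ.erase c, ∀ b ∈ Finset.univ.erase c,
        (N a b : ℝ) * σ (θ' b - θ' a) = (N a b : ℝ) * σ (θstar b - θstar a) := by
      intro a ha b hb
      rw [hθ'ne a (Finset.ne_of_mem_erase ha), hθ'ne b (Finset.ne_of_mem_erase hb)]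
    have h2 : (∑ a ∈ Finset.univ.erase c, ∑ b ∈ Finset.univ.erase c,
          (N a b : ℝ) * σ (θ' b - θ' a))
        = ∑ a ∈ Finset.univ.erase c, ∑ b ∈ Finset.univ.erase c,
          (N a b : ℝ) * σ (θstar b - θstar a) := by
      apply Finset.sum_congr rfl
      intro a ha
      exact Finset.sum_congr rfl (fun b hb => hsame a ha b hb)
    rw [h2]
    refine add_lt_add_of_lt_of_le ?_ le_rfl
    apply Finset.sum_lt_sum_of_nonempty
    · obtain ⟨b, hb⟩ := Fintype.exists_ne_of_one_lt_card hA c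
      exact ⟨b, Finset.mem_erase.mpr ⟨hb, Finset.mem_univ b⟩⟩
    · intro b hb
      have hbc : b ≠ c := Finset.ne_of_mem_erase hb
      rw [hθ'ne b hbc, hθ'c]
      set t := θstar c
      set u := θstar b
      have hN : (N b c : ℝ) < (N c b : ℝ) := by exact_mod_cast hc b hbc
      have h1 : σ (t - u) < σ (θmax - u) := hσmono (by simp only [t]; linarith)
      have e1 : σ (u - θmax) = 1 - σ (θmax - u) := by
        rw [← hσneg]; ring_nf
      have e2 : σ (u - t) = 1 - σ (t - u) := by
        rw [← hσneg]; ring_nf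
      rw [e1, e2]
      nlinarith [mul_pos (sub_pos.mpr hN) (sub_pos.mpr h1)]
  exact absurd (hmin θ' hball') (not_le.mpr hLlt)
end

section
/- If the preference-count matrix N admits a strong Condorcet winner c ∈ A, then the sigmoid loss L̃ has no global minimizer over all of ℝ^A: for every rating vector θ : A → ℝ there exists θ' : A → ℝ with L̃(θ') < L̃(θ) (in particular, the infimum of L̃ over ℝ^A is not attained). -/
/-- If the preference-count matrix `N` admits a strong Condorcet
winner, then the sigmoid loss has no global minimizer over all of ℝ^A: every
rating vector is strictly improved upon by some other rating vector. -/
theorem sco_no_global_minimizer_with_condorcet_winner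
    {A : Type*} [Fintype A] [DecidableEq A]
    (hA : 1 < Fintype.card A)
    (N : A → A → ℕ) (hdiag : ∀ a, N a a = 0)
    (τ : ℝ) (hτ : 0 < τ)
    (c : A) (hc : ∀ b, b ≠ c → N b c < N c b)
    (σ : ℝ → ℝ) (hσ : ∀ x, σ x = 1 / (1 + Real.exp (-x / τ)))
    (L : (A → ℝ) → ℝ)
    (hL : ∀ θ : A → ℝ, L θ = ∑ a : A, ∑ b : A, (N a b : ℝ) * σ (θ b - θ a)) :
    ∀ θ : A → ℝ, ∃ θ' : A → ℝ, L θ' < L θ := by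
  intro θ
  classical
  -- σ is strictly monotone
  have hσmono : StrictMono σ := by
    intro x y hxy
    rw [hσ, hσ]
    have hexp : Real.exp (-y / τ) < Real.exp (-x / τ) := by
      apply Real.exp_lt_exp.2
      apply div_lt_div_of_pos_right (by linarith) hτ
    have hy : (0:ℝ) < 1 + Real.exp (-y / τ) := by positivity
    apply one_div_lt_one_div_of_lt hy (by linarith)
  -- σ(-x) = 1 - σ(x)
  have hσflip : ∀ x : ℝ, σ (-x) = 1 - σ x := by
    intro x
    rw [hσ, hσ]
    have hkey : Real.exp (-x / τ) * Real.exp (x / τ) = 1 := by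
      rw [← Real.exp_add]; ring_nf; exact Real.exp_zero
    have h1 : (0:ℝ) < 1 + Real.exp (-x / τ) := by positivity
    have h2 : (0:ℝ) < 1 + Real.exp (x / τ) := by positivity
    have hnn : -(-x) / τ = x / τ := by ring
    rw [hnn]
    field_simp
    rw [neg_div] at hkey; nlinarith [hkey]
  set θ' : A → ℝ := fun x => θ x + if x = c then 1 else 0 with hθ'def
  refine ⟨θ', ?_⟩
  set g : A → A → ℝ := fun a b => (N a b : ℝ) * (σ (θ' b - θ' a) - σ (θ b - θ a))
    with hgdef
  have hθ'c : θ' c = θ c + 1 := by simp [hθ'def]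
  have hθ'ne : ∀ x, x ≠ c → θ' x = θ x := by
    intro x hx; simp [hθ'def, hx]
  -- g vanishes when neither coordinate is c
  have hg0 : ∀ a b, a ≠ c → b ≠ c → g a b = 0 := by
    intro a b ha hb
    simp [hgdef, hθ'ne a ha, hθ'ne b hb]
  have hgcc : g c c = 0 := by simp [hgdef, hdiag c]
  -- the difference of the sums
  have hD : L θ' - L θ = ∑ a : A, ∑ b : A, g a b := by
    rw [hL, hL, ← Finset.sum_sub_distrib]
    apply Finset.sum_congr rfl
    intro a _
    rw [← Finset.sum_sub_distrib]
    apply Finset.sum_congr rfl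
    intro b _
    simp [hgdef]; ring
  -- rewrite as sum over b ≠ c
  have hsplit : ∑ a : A, ∑ b : A, g a b
      = ∑ b ∈ Finset.univ \ {c}, (g b c + g c b) := by
    rw [Finset.sum_eq_sum_sdiff_singleton_add (Finset.mem_univ c)
         (fun a => ∑ b : A, g a b)]
    have h1 : ∀ a ∈ Finset.univ \ {c}, (∑ b : A, g a b) = g a c := by
      intro a ha
      rw [Finset.mem_sdiff, Finset.mem_singleton] at ha
      rw [Finset.sum_eq_sum_sdiff_singleton_add (Finset.mem_univ c)
           (fun b => g a b)]
      rw [Finset.sum_eq_zero, zero_add]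
      intro b hb
      rw [Finset.mem_sdiff, Finset.mem_singleton] at hb
      exact hg0 a b ha.2 hb.2
    have h2 : (∑ b : A, g c b) = ∑ b ∈ Finset.univ \ {c}, g c b := by
      rw [Finset.sum_eq_sum_sdiff_singleton_add (Finset.mem_univ c)
           (fun b => g c b), hgcc, add_zero]
    rw [Finset.sum_congr rfl h1, h2, ← Finset.sum_add_distrib]
  -- each paired term is strictly negative
  have hneg : ∀ b ∈ Finset.univ \ {c}, g b c + g c b < 0 := by
    intro b hb
    rw [Finset.mem_sdiff, Finset.mem_singleton] at hb
    have hbc := hb.2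
    have hθ'b : θ' b = θ b := hθ'ne b hbc
    have e1 : θ' c - θ' b = -(θ b - θ c - 1) := by rw [hθ'c, hθ'b]; ring
    have e2 : θ c - θ b = -(θ b - θ c) := by ring
    have e3 : θ' b - θ' c = θ b - θ c - 1 := by rw [hθ'c, hθ'b]; ring
    have hval : g b c + g c b
        = ((N b c : ℝ) - (N c b : ℝ)) * (σ (θ b - θ c) - σ (θ b - θ c - 1)) := by
      simp only [hgdef, e1, e2, e3, hσflip]
      ring
    rw [hval]
    apply mul_neg_of_neg_of_pos
    · have := hc b hbc
      have : (N b c : ℝ) < (N c b : ℝ) := by exact_mod_cast this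
      linarith
    · have : σ (θ b - θ c - 1) < σ (θ b - θ c) := hσmono (by linarith)
      linarith
  have hnonempty : (Finset.univ \ {c} : Finset A).Nonempty := by
    obtain ⟨b, hb⟩ := Fintype.exists_ne_of_one_lt_card hA c
    exact ⟨b, by simp [hb]⟩
  have : L θ' - L θ < 0 := by
    rw [hD, hsplit]
    exact Finset.sum_neg hneg hnonempty
  linarith
end

section
/- Let [⪰] be a preference profile over A. The minimum of the discrete loss over injective rating vectors equals the minimum over strict linear orders of the sum of Kendall-tau distances to the votes: min_{θ : A → ℝ injective} Σ_{v ∈ [⪰]} #{(i,j) : 0 ≤ i < j < |v| and θ(v[j]) > θ(v[i])} = min_{R a strict linear order on A} Σ_{v ∈ [⪰]} K_d(v, R). Consequently, an injective θ minimizes the discrete loss if and only if the ranking R_θ it induces (a ≻ b iff θ(a) > θ(b)) is an optimal ranking, i.e., one minimizing Σ_{v ∈ [⪰]} K_d(v, R) over all strict linear orders R on A. -/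
/-- Kendall-tau distance from a vote `v` (an injective list, highest-ranked
first) to a strict linear order `lt` on `A` ⊇ elements of `v`: the number of
unordered pairs of distinct elements of `v` ordered differently by `v` and by
`lt`, counted by enumerating each pair `(x, y)` with `x` ranked above `y` in
`v` but `x` below `y` (i.e. `lt x y`) in the order. -/
def voteKendallTau {A : Type*} [DecidableEq A] (v : List A)
    (lt : A → A → Prop) [DecidableRel lt] : ℕ :=
  ((v.toFinset ×ˢ v.toFinset).filter
      (fun p : A × A => v.idxOf p.1 < v.idxOf p.2 ∧ lt p.1 p.2)).card

/-- Sum of Kendall-tau distances from all votes of a profile to the strict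
linear order given by a `LinearOrder` structure `r` on `A`. -/
def profileKendallTau {A : Type*} [DecidableEq A]
    (profile : Multiset (List A)) (r : LinearOrder A) : ℕ :=
  (profile.map (fun v => voteKendallTau v (fun a b => r.lt a b))).sum

/-- The discrete loss of a rating vector `θ`: the number of index pairs
`i < j` within each vote on which `θ` misorders the vote, summed over votes. -/
noncomputable def discreteLoss {A : Type*} (profile : Multiset (List A))
    (θ : A → ℝ) : ℕ :=
  (profile.map (fun v =>
      (Finset.univ.filter
          (fun p : Fin v.length × Fin v.length =>
            (p.1 : ℕ) < (p.2 : ℕ) ∧ θ (v.get p.1) < θ (v.get p.2))).card)).sum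

lemma vote_eq {A : Type*} [DecidableEq A] (v : List A) (hv : v.Nodup)
    (lt : A → A → Prop) [DecidableRel lt] (θ : A → ℝ)
    (h : ∀ a b, lt a b ↔ θ a < θ b) :
    (Finset.univ.filter
        (fun p : Fin v.length × Fin v.length =>
          (p.1 : ℕ) < (p.2 : ℕ) ∧ θ (v.get p.1) < θ (v.get p.2))).card
      = voteKendallTau v lt := by
  unfold voteKendallTau
  apply Finset.card_bij (fun p _ => (v.get p.1, v.get p.2))
  · rintro ⟨i, j⟩ hp
    simp only [Finset.mem_filter, Finset.mem_univ, true_and] at hp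
    simp only [Finset.mem_filter, Finset.mem_product, List.mem_toFinset]
    refine ⟨⟨List.get_mem v i, List.get_mem v j⟩, ?_, (h _ _).2 hp.2⟩
    rw [List.get_idxOf hv, List.get_idxOf hv]
    exact hp.1
  · rintro ⟨i, j⟩ hp ⟨i', j'⟩ hp' he
    have hi := List.nodup_iff_injective_get.1 hv
    simp only [Prod.mk.injEq] at he
    exact Prod.ext (hi he.1) (hi he.2)
  · rintro ⟨x, y⟩ hp
    simp only [Finset.mem_filter, Finset.mem_product, List.mem_toFinset] at hp
    obtain ⟨⟨hx, hy⟩, hij, hlt⟩ := hp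
    refine ⟨(⟨v.idxOf x, List.idxOf_lt_length_iff.2 hx⟩,
      ⟨v.idxOf y, List.idxOf_lt_length_iff.2 hy⟩), ?_, ?_⟩
    · simp only [Finset.mem_filter, Finset.mem_univ, true_and]
      exact ⟨hij, by rw [List.idxOf_get, List.idxOf_get]; exact (h _ _).1 hlt⟩
    · simp [List.idxOf_get]

lemma voteKendallTau_congr {A : Type*} [DecidableEq A] (v : List A)
    (lt lt' : A → A → Prop) [DecidableRel lt] [DecidableRel lt']
    (h : ∀ a b, lt a b ↔ lt' a b) :
    voteKendallTau v lt = voteKendallTau v lt' := by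
  unfold voteKendallTau
  congr 1
  ext p
  simp [h]

lemma discreteLoss_eq {A : Type*} [DecidableEq A]
    (profile : Multiset (List A)) (hnodup : ∀ v ∈ profile, v.Nodup)
    (θ : A → ℝ) (hθ : Function.Injective θ) :
    discreteLoss profile θ = profileKendallTau profile (LinearOrder.lift' θ hθ) := by
  unfold discreteLoss profileKendallTau
  congr 1
  apply Multiset.map_congr rfl
  intro v hv
  exact vote_eq v (hnodup v hv) _ θ (fun a b => Iff.rfl)

/-- A monotone real embedding of a linear order on a fintype. -/
noncomputable def ordTheta {A : Type*} [Fintype A] [DecidableEq A]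
    (r : LinearOrder A) : A → ℝ :=
  fun a => ((Finset.univ.filter (fun b => r.le b a)).card : ℝ)

lemma ordTheta_strictMono {A : Type*} [Fintype A] [DecidableEq A]
    (r : LinearOrder A) : @StrictMono A ℝ (r.toPartialOrder.toPreorder) _ (ordTheta r) := by
  letI := r
  intro a b h
  unfold ordTheta
  have hsub : Finset.univ.filter (fun c => r.le c a) ⊂
      Finset.univ.filter (fun c => r.le c b) := by
    constructor
    · intro c hc
      simp only [Finset.mem_filter, Finset.mem_univ, true_and] at *
      exact le_trans hc (le_of_lt h)
    · intro hle
      have hb : b ∈ Finset.univ.filter (fun c => r.le c b) := by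
        simp [le_refl]
      have := hle hb
      simp only [Finset.mem_filter, Finset.mem_univ, true_and] at this
      exact absurd this (not_le.2 h)
  exact_mod_cast Finset.card_lt_card hsub

lemma ordTheta_lt_iff {A : Type*} [Fintype A] [DecidableEq A] (r : LinearOrder A)
    {a b : A} : ordTheta r a < ordTheta r b ↔ r.lt a b := by
  letI := r
  exact (ordTheta_strictMono r).lt_iff_lt

lemma ordTheta_inj {A : Type*} [Fintype A] [DecidableEq A] (r : LinearOrder A) :
    Function.Injective (ordTheta r) := by
  letI := r
  exact (ordTheta_strictMono r).injective

lemma profileKendallTau_ord {A : Type*} [Fintype A] [DecidableEq A]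
    (profile : Multiset (List A)) (r : LinearOrder A) :
    profileKendallTau profile (LinearOrder.lift' (ordTheta r) (ordTheta_inj r)) =
      profileKendallTau profile r := by
  unfold profileKendallTau
  congr 1
  apply Multiset.map_congr rfl
  intro v hv
  exact voteKendallTau_congr v _ _ (fun a b => ordTheta_lt_iff r)


private theorem main

    {A : Type*} [Fintype A] [DecidableEq A]
    (profile : Multiset (List A)) (hnodup : ∀ v ∈ profile, v.Nodup) :
    sInf {n : ℕ | ∃ θ : A → ℝ, Function.Injective θ ∧ discreteLoss profile θ = n} =
      sInf {n : ℕ | ∃ r : LinearOrder A, profileKendallTau profile r = n} ∧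
    ∀ (θ : A → ℝ) (hθ : Function.Injective θ),
      ((∀ θ' : A → ℝ, Function.Injective θ' →
          discreteLoss profile θ ≤ discreteLoss profile θ') ↔
        (∀ r : LinearOrder A,
          profileKendallTau profile (LinearOrder.lift' θ hθ) ≤
            profileKendallTau profile r)) := by
  constructor
  · congr 1
    ext n
    constructor
    · rintro ⟨θ, hθ, hn⟩
      exact ⟨LinearOrder.lift' θ hθ, by rw [← discreteLoss_eq profile hnodup θ hθ]; exact hn⟩
    · rintro ⟨r, hn⟩
      refine ⟨ordTheta r, ordTheta_inj r, ?_⟩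
      rw [discreteLoss_eq profile hnodup _ (ordTheta_inj r), profileKendallTau_ord]
      exact hn
  · intro θ hθ
    constructor
    · intro H r
      calc profileKendallTau profile (LinearOrder.lift' θ hθ)
          = discreteLoss profile θ := (discreteLoss_eq profile hnodup θ hθ).symm
        _ ≤ discreteLoss profile (ordTheta r) := H _ (ordTheta_inj r)
        _ = profileKendallTau profile r := by
            rw [discreteLoss_eq profile hnodup _ (ordTheta_inj r), profileKendallTau_ord]
    · intro H θ' hθ'
      calc discreteLoss profile θ
          = profileKendallTau profile (LinearOrder.lift' θ hθ) :=
            discreteLoss_eq profile hnodup θ hθ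
        _ ≤ profileKendallTau profile (LinearOrder.lift' θ' hθ') := H _
        _ = discreteLoss profile θ' := (discreteLoss_eq profile hnodup θ' hθ').symm

/-- The minimum of the discrete loss over injective rating
vectors equals the minimum, over strict linear orders on `A`, of the sum of
Kendall-tau distances to the votes; and an injective `θ` minimizes the
discrete loss iff the ranking it induces (`a ≻ b` iff `θ a > θ b`) is an
optimal ranking. -/
theorem sco_discrete_loss_min_eq_optimal_ranking_min
    {A : Type*} [Fintype A] [DecidableEq A]
    (profile : Multiset (List A)) (hnodup : ∀ v ∈ profile, v.Nodup) :
    sInf {n : ℕ | ∃ θ : A → ℝ, Function.Injective θ ∧ discreteLoss profile θ = n} =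
      sInf {n : ℕ | ∃ r : LinearOrder A, profileKendallTau profile r = n} ∧
    ∀ (θ : A → ℝ) (hθ : Function.Injective θ),
      ((∀ θ' : A → ℝ, Function.Injective θ' →
          discreteLoss profile θ ≤ discreteLoss profile θ') ↔
        (∀ r : LinearOrder A,
          profileKendallTau profile (LinearOrder.lift' θ hθ) ≤
            profileKendallTau profile r)) := by
  exact main profile hnodup
end

section
/- Raising a Condorcet winner to the top strictly decreases the sigmoid loss: let c ∈ A be a strong Condorcet winner for the preference-count matrix N, and let θ : A → ℝ be a rating vector with θ(c) < max_{a ≠ c} θ(a). Then the vector θ' defined by θ'(c) = max_{a ≠ c} θ(a) and θ'(a) = θ(a) for a ≠ c satisfies L̃(θ') < L̃(θ). In particular, at any θ where c does not have one of the highest ratings, the loss can be strictly decreased without changing any rating other than that of c. -/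
/-- Raising a strong Condorcet winner `c` to the top strictly
decreases the sigmoid loss: if `θ c < max_{a ≠ c} θ a`, then updating the
rating of `c` to `max_{a ≠ c} θ a` (leaving all other ratings unchanged)
strictly decreases `L̃`. -/
theorem sco_raising_condorcet_winner_decreases_loss
    {A : Type*} [Fintype A] [DecidableEq A]
    (hA : 1 < Fintype.card A)
    (N : A → A → ℕ) (hdiag : ∀ a, N a a = 0)
    (τ : ℝ) (hτ : 0 < τ)
    (c : A) (hc : ∀ b, b ≠ c → N b c < N c b)
    (σ : ℝ → ℝ) (hσ : ∀ x, σ x = 1 / (1 + Real.exp (-x / τ)))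
    (L : (A → ℝ) → ℝ)
    (hL : ∀ θ : A → ℝ, L θ = ∑ a : A, ∑ b : A, (N a b : ℝ) * σ (θ b - θ a))
    (θ : A → ℝ)
    (hne : (Finset.univ.erase c).Nonempty)
    (hlt : θ c < (Finset.univ.erase c).sup' hne θ) :
    L (Function.update θ c ((Finset.univ.erase c).sup' hne θ)) < L θ := by
  set E := Finset.univ.erase c with hE
  set M := E.sup' hne θ with hM
  set θ' := Function.update θ c M with hθ'def
  have hθ'c : θ' c = M := Function.update_self _ _ _
  have hθ'a : ∀ a, a ≠ c → θ' a = θ a := fun a ha =>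
    Function.update_of_ne ha _ _
  -- monotonicity of σ
  have hmono : ∀ x y : ℝ, x < y → σ x < σ y := by
    intro x y hxy
    rw [hσ, hσ]
    have h1 : Real.exp (-y / τ) < Real.exp (-x / τ) := by
      apply Real.exp_lt_exp.mpr
      gcongr
    have h2 : (0:ℝ) < 1 + Real.exp (-y / τ) := by positivity
    exact one_div_lt_one_div_of_lt h2 (by linarith)
  -- σ x + σ (-x) = 1
  have hsum1 : ∀ x : ℝ, σ x + σ (-x) = 1 := by
    intro x
    rw [hσ, hσ]
    have key : Real.exp (-x / τ) * Real.exp (- -x / τ) = 1 := by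
      rw [← Real.exp_add]
      rw [show -x / τ + - -x / τ = 0 by ring, Real.exp_zero]
    have p1 : (0:ℝ) < 1 + Real.exp (-x / τ) := by positivity
    have p2 : (0:ℝ) < 1 + Real.exp (- -x / τ) := by positivity
    rw [neg_neg] at key p2
    field_simp
    rw [neg_div] at key
    nlinarith [key]
  have split : ∀ g : A → ℝ, ∑ a, g a = g c + ∑ a ∈ E, g a := fun g =>
    (Finset.add_sum_erase _ g (Finset.mem_univ c)).symm
  have expand : ∀ ψ : A → ℝ, (∑ a : A, ∑ b : A, (N a b : ℝ) * σ (ψ b - ψ a))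
      = (∑ b ∈ E, (N c b : ℝ) * σ (ψ b - ψ c))
        + ∑ a ∈ E, ((N a c : ℝ) * σ (ψ c - ψ a)
            + ∑ b ∈ E, (N a b : ℝ) * σ (ψ b - ψ a)) := by
    intro ψ
    rw [split (fun a => ∑ b : A, (N a b : ℝ) * σ (ψ b - ψ a))]
    congr 1
    · rw [split (fun b => (N c b : ℝ) * σ (ψ b - ψ c))]
      simp [hdiag]
    · exact Finset.sum_congr rfl fun a _ =>
        split (fun b => (N a b : ℝ) * σ (ψ b - ψ a))
  rw [hL, hL, expand θ', expand θ]
  have e1 : (∑ b ∈ E, (N c b : ℝ) * σ (θ' b - θ' c))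
      = ∑ b ∈ E, (N c b : ℝ) * σ (θ b - M) := by
    refine Finset.sum_congr rfl fun b hb => by
      rw [hθ'c, hθ'a b (Finset.ne_of_mem_erase hb)]
  have e2 : (∑ a ∈ E, ((N a c : ℝ) * σ (θ' c - θ' a)
        + ∑ b ∈ E, (N a b : ℝ) * σ (θ' b - θ' a)))
      = ∑ a ∈ E, ((N a c : ℝ) * σ (M - θ a)
        + ∑ b ∈ E, (N a b : ℝ) * σ (θ b - θ a)) := by
    refine Finset.sum_congr rfl fun a ha => ?_
    rw [hθ'c, hθ'a a (Finset.ne_of_mem_erase ha)]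
    congr 1
    exact Finset.sum_congr rfl fun b hb => by
      rw [hθ'a b (Finset.ne_of_mem_erase hb)]
  rw [e1, e2, ← Finset.sum_add_distrib, ← Finset.sum_add_distrib]
  apply Finset.sum_lt_sum_of_nonempty hne
  intro a ha
  have hac : a ≠ c := Finset.ne_of_mem_erase ha
  have h1 : σ (θ a - M) < σ (θ a - θ c) := hmono _ _ (by linarith)
  have h2 : σ (M - θ a) = 1 - σ (θ a - M) := by
    have := hsum1 (θ a - M); rw [neg_sub] at this; linarith
  have h3 : σ (θ c - θ a) = 1 - σ (θ a - θ c) := by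
    have := hsum1 (θ a - θ c); rw [neg_sub] at this; linarith
  have hN : (N a c : ℝ) < N c a := by exact_mod_cast hc a hac
  have hN0 : (0:ℝ) ≤ (N a c : ℝ) := Nat.cast_nonneg _
  rw [h2, h3]
  nlinarith [mul_pos (sub_pos.mpr hN) (sub_pos.mpr h1)]
end
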